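/- Let C be an [n,k]_{q^m/q} rank-metric code with n ≤ m and with the property that the maximum rank of a codeword equals k. Then C has a basis consisting of vectors all of whose entries lie in F_q. -/

import Mathlib

open Module Submodule

/-- The rank support of a vector `v ∈ L^n` over the subfield `K`: the `K`-span of the
rows of the expansion matrix, i.e. the space of all `(φ (v 1), ..., φ (v n))` for
`K`-linear functionals `φ : L → K`. -/
noncomputable def rkSupport (K : Type) {L : Type} [Field K] [Field L] [Algebra K L]
    {n : ℕ} (v : Fin n → L) : Submodule K (Fin n → K) :=
  LinearMap.range (LinearMap.pi (fun i => LinearMap.applyₗ (v i) :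
    Fin n → Module.Dual K L →ₗ[K] K))

section Aux

variable {K L : Type} [Field K] [Field L] [Algebra K L]

/-- Any prescribed values on a `K`-linearly independent family extend to a functional. -/
lemma exists_dual_eq {r : ℕ} {μ : Fin r → L}
    (h : LinearIndependent K μ) (a : Fin r → K) :
    ∃ φ : Module.Dual K L, ∀ s, φ (μ s) = a s := by
  set W := Submodule.span K (Set.range μ) with hW
  obtain ⟨U, hU⟩ := Submodule.exists_isCompl W
  let Bμ : Basis (Fin r) K W := Basis.span h
  let f₀ : W →ₗ[K] K := Bμ.constr K a
  refine ⟨f₀ ∘ₗ (W.linearProjOfIsCompl U hU), fun s => ?_⟩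
  have hmem : μ s ∈ W := Submodule.subset_span ⟨s, rfl⟩
  have h1 : (W.linearProjOfIsCompl U hU) (μ s) = ⟨μ s, hmem⟩ :=
    Submodule.linearProjOfIsCompl_apply_left hU ⟨μ s, hmem⟩
  have h2 : Bμ s = (⟨μ s, hmem⟩ : W) := by
    apply Subtype.ext
    exact congrArg Subtype.val (Basis.span_apply h s)
  simp only [LinearMap.comp_apply, h1, ← h2]
  exact Bμ.constr_basis K a s

/-- Rank lower bound: if `r` entries of `v` (along `ι`) are `K`-linearly independent, then
the rank support has dimension at least `r`. -/
lemma le_finrank_rkSupport [FiniteDimensional K L] {n r : ℕ} (v : Fin n → L)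
    (ι : Fin r → Fin n) (h : LinearIndependent K (v ∘ ι)) :
    r ≤ Module.finrank K (rkSupport K v) := by
  have hsurj : Submodule.map (LinearMap.funLeft K K ι) (rkSupport K v) = ⊤ := by
    rw [Submodule.eq_top_iff']
    intro a
    obtain ⟨φ, hφ⟩ := exists_dual_eq h a
    refine ⟨(LinearMap.pi (fun i => LinearMap.applyₗ (v i) :
        Fin n → Module.Dual K L →ₗ[K] K)) φ, ⟨φ, rfl⟩, ?_⟩
    ext s
    simpa [LinearMap.funLeft_apply, LinearMap.pi_apply] using hφ s
  calc r = Module.finrank K (⊤ : Submodule K (Fin r → K)) := by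
        simp [finrank_top, Module.finrank_pi]
    _ = Module.finrank K (Submodule.map (LinearMap.funLeft K K ι) (rkSupport K v)) := by
        rw [hsurj]
    _ ≤ Module.finrank K (rkSupport K v) := Submodule.finrank_map_le _ _

/-- Elementary transformation preserves linear independence. -/
lemma linearIndependent_update_add {k : ℕ} {lam : Fin k → L} {i j : Fin k} (hij : i ≠ j)
    (h : LinearIndependent K lam) :
    LinearIndependent K (Function.update lam i (lam i + lam j)) := by
  rw [Fintype.linearIndependent_iff] at h ⊢
  intro c hc
  have hfun : ∀ t, c t • Function.update lam i (lam i + lam j) t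
      = (c t • lam t) + (if t = i then c i • lam j else 0) := by
    intro t
    by_cases ht : t = i
    · subst ht; simp [Function.update_self, smul_add]
    · simp [Function.update_of_ne ht, ht]
  rw [Finset.sum_congr rfl (fun t _ => hfun t), Finset.sum_add_distrib] at hc
  have hsum2 : (∑ t : Fin k, if t = i then c i • lam j else 0) = c i • lam j := by
    simp
  rw [hsum2] at hc
  have key : ∑ t : Fin k, (c t + if t = j then c i else 0) • lam t = 0 := by
    have : ∀ t : Fin k, (c t + if t = j then c i else 0) • lam t
        = c t • lam t + (if t = j then c i • lam j else 0) := by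
      intro t
      by_cases ht : t = j
      · subst ht; simp [add_smul]
      · simp [ht]
    rw [Finset.sum_congr rfl (fun t _ => this t), Finset.sum_add_distrib]
    simpa using hc
  have hall := h _ key
  have hci : c i = 0 := by
    have := hall i
    simpa [if_neg hij] using this
  intro t
  have := hall t
  by_cases ht : t = j
  · subst ht; simpa [hci] using this
  · simpa [ht] using this

/-- The key column lemma: if for every `K`-independent `λ` the combination
`∑ λ t * g t` lies in the `K`-span of `λ`, and `k < [L:K]`, then all `g t ∈ K`. -/
lemma entries_in_base [FiniteDimensional K L] {k : ℕ}
    (hkm : k < Module.finrank K L) (g : Fin k → L)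
    (hg : ∀ lam : Fin k → L, LinearIndependent K lam →
      (∑ t, lam t * g t) ∈ Submodule.span K (Set.range lam)) :
    ∀ i, ∃ x : K, g i = algebraMap K L x := by
  intro i
  match k, hkm, g, hg, i with
  | 0, _, _, _, i => exact i.elim0
  | 1, hkm, g, hg, i =>
    have huniq : LinearIndependent K (fun _ : Fin 1 => (1 : L)) :=
      linearIndependent_unique_iff.mpr (one_ne_zero)
    have h1 := hg _ huniq
    rw [Fin.sum_univ_one, one_mul] at h1
    have hrange : Set.range (fun _ : Fin 1 => (1 : L)) = {1} := Set.range_const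
    rw [hrange, Submodule.mem_span_singleton] at h1
    obtain ⟨x, hx⟩ := h1
    have hi : i = 0 := Subsingleton.elim i 0
    subst hi
    exact ⟨x, by rw [← hx, Algebra.algebraMap_eq_smul_one]⟩
  | (k'' + 2), hkm, g, hg, i =>
    by_contra hcon
    push_neg at hcon
    -- `1` and `g i` are independent over `K`
    have hind : LinearIndependent K ![(1 : L), g i] := by
      rw [LinearIndependent.pair_iff' one_ne_zero]
      intro a ha
      exact hcon a (by rw [← ha, Algebra.algebraMap_eq_smul_one])
    obtain ⟨f, hf⟩ := exists_dual_eq hind ![0, 1]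
    have hf1 : f 1 = 0 := by simpa using hf 0
    have hfg : f (g i) = 1 := by simpa using hf 1
    set W := LinearMap.ker f with hWdef
    have h1W : (1 : L) ∈ W := LinearMap.mem_ker.mpr hf1
    -- `W` has dimension at least `k'' + 2`
    have hrange_le : Module.finrank K (LinearMap.range f) ≤ 1 := by
      simpa [Module.finrank_self] using Submodule.finrank_le (LinearMap.range f)
    have hrn := LinearMap.finrank_range_add_finrank_ker f
    rw [← hWdef] at hrn
    have hWk : k'' + 2 ≤ Module.finrank K W := by omega
    set w₁ : W := ⟨1, h1W⟩ with hw₁def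
    have hw₁ : w₁ ≠ 0 := by
      intro h0
      exact one_ne_zero (congrArg Subtype.val h0)
    obtain ⟨U, hU⟩ := Submodule.exists_isCompl (Submodule.span K {w₁})
    have hUrank : k'' + 1 ≤ Module.finrank K U := by
      have := Submodule.finrank_add_eq_of_isCompl hU
      rw [finrank_span_singleton hw₁] at this
      omega
    haveI : Module.Free K U := Module.Free.of_divisionRing K U
    let BU : Basis (Fin (Module.finrank K U)) K U := Module.finBasis K U
    let v : Fin (k'' + 1) → W := fun t => ((BU (Fin.castLE hUrank t)) : W)
    have hv_ind : LinearIndependent K v := by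
      have h1 : LinearIndependent K (BU ∘ Fin.castLE hUrank) :=
        BU.linearIndependent.comp _ (Fin.castLE_injective hUrank)
      exact LinearIndependent.map_injOn h1 U.subtype U.injective_subtype.injOn
    have hv_mem : ∀ t, v t ∈ U := fun t => (BU (Fin.castLE hUrank t)).2
    have hcons : LinearIndependent K (Fin.cons w₁ v) := by
      rw [linearIndependent_fin_cons]
      refine ⟨hv_ind, fun hmem => ?_⟩
      have hsub : Submodule.span K (Set.range v) ≤ U :=
        Submodule.span_le.2 (by rintro x ⟨t, rfl⟩; exact hv_mem t)
      have hw₁U : w₁ ∈ U := hsub hmem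
      have : w₁ ∈ (⊥ : Submodule K W) := by
        rw [← hU.inf_eq_bot]
        exact ⟨Submodule.mem_span_singleton_self w₁, hw₁U⟩
      exact hw₁ (by simpa using this)
    -- position `j₀ ≠ i` for the entry `1`
    have h01 : (0 : Fin (k'' + 2)) ≠ 1 := by
      intro h
      have := congrArg Fin.val h
      simp [Fin.val_one] at this
    set j₀ : Fin (k'' + 2) := if i = 0 then 1 else 0 with hj₀def
    have hij₀ : i ≠ j₀ := by
      rcases eq_or_ne i 0 with hi0 | hi0
      · rw [hj₀def, if_pos hi0, hi0]; exact h01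
      · rw [hj₀def, if_neg hi0]; exact hi0
    set σ := Equiv.swap (0 : Fin (k'' + 2)) j₀ with hσdef
    set μW : Fin (k'' + 2) → W := Fin.cons w₁ v with hμWdef
    set lam : Fin (k'' + 2) → L := fun t => ((μW (σ t) : W) : L) with hlamdef
    have hlam_ind : LinearIndependent K lam := by
      have h1 : LinearIndependent K (μW ∘ σ) := by
        rw [hμWdef]; exact hcons.comp σ σ.injective
      exact h1.map' W.subtype (Submodule.ker_subtype W)
    have hlamW : ∀ t, lam t ∈ W := fun t => (μW (σ t)).2
    have hlamj₀ : lam j₀ = 1 := by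
      have hσj : σ j₀ = 0 := Equiv.swap_apply_right 0 j₀
      rw [hlamdef]
      simp only [hσj, hμWdef, Fin.cons_zero]
      rfl
    have h1 := hg lam hlam_ind
    set lam' := Function.update lam i (lam i + lam j₀) with hlam'def
    have h2 := hg lam' (linearIndependent_update_add hij₀ hlam_ind)
    have hspan' : Submodule.span K (Set.range lam') ≤ Submodule.span K (Set.range lam) := by
      refine Submodule.span_le.2 ?_
      rintro x ⟨t, rfl⟩
      by_cases ht : t = i
      · rw [ht, hlam'def, Function.update_self]
        exact Submodule.add_mem _ (Submodule.subset_span ⟨i, rfl⟩)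
          (Submodule.subset_span ⟨j₀, rfl⟩)
      · rw [hlam'def, Function.update_of_ne ht]
        exact Submodule.subset_span ⟨t, rfl⟩
    have hsum : ∑ t, lam' t * g t = (∑ t, lam t * g t) + lam j₀ * g i := by
      have hfun : ∀ t, lam' t * g t = lam t * g t + (if t = i then lam j₀ * g i else 0) := by
        intro t
        by_cases ht : t = i
        · rw [ht, hlam'def, Function.update_self, if_pos rfl, add_mul]
        · simp [hlam'def, Function.update_of_ne ht, ht]
      rw [Finset.sum_congr rfl (fun t _ => hfun t), Finset.sum_add_distrib]
      simp
    have hgi_mem : g i ∈ Submodule.span K (Set.range lam) := by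
      have h2' : (∑ t, lam t * g t) + lam j₀ * g i ∈ Submodule.span K (Set.range lam) := by
        rw [← hsum]; exact hspan' h2
      have := Submodule.sub_mem _ h2' h1
      simpa [hlamj₀] using this
    have hgiW : g i ∈ W := by
      have hle : Submodule.span K (Set.range lam) ≤ W := by
        refine Submodule.span_le.2 ?_
        rintro x ⟨t, rfl⟩
        exact hlamW t
      exact hle hgi_mem
    rw [LinearMap.mem_ker] at hgiW
    rw [hfg] at hgiW
    exact one_ne_zero hgiW

end Aux

section Pivot

open Matrix

variable {L : Type} [Field L]

/-- Every `k`-dimensional subspace of `L^n` has a basis in "systematic form". -/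
lemma exists_pivot_basis {n k : ℕ} (C : Submodule L (Fin n → L))
    (hk : Module.finrank L C = k) :
    ∃ (p : Fin k → Fin n) (g : Fin k → Fin n → L),
      (∀ t, g t ∈ C) ∧ LinearIndependent L g ∧ Submodule.span L (Set.range g) = C ∧
      ∀ t s, g t (p s) = if s = t then 1 else 0 := by
  classical
  let B₀ : Basis (Fin k) L C := (Module.finBasis L C).reindex (finCongr hk)
  set M : Matrix (Fin k) (Fin n) L := Matrix.of (fun t j => (B₀ t : Fin n → L) j) with hM
  -- the row space of `M` is (essentially) `C`, of dimension `k`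
  have hMT : LinearMap.range (Matrix.mulVecLin Mᵀ) =
      Submodule.map C.subtype ⊤ := by
    have heq : Matrix.mulVecLin Mᵀ
        = C.subtype ∘ₗ (B₀.equivFun.symm : (Fin k → L) →ₗ[L] C) := by
      refine LinearMap.ext fun y => funext fun j => ?_
      simp only [Matrix.mulVecLin_apply, Matrix.mulVec, dotProduct,
        Matrix.transpose_apply, LinearMap.comp_apply, Submodule.coe_subtype,
        LinearEquiv.coe_coe]
      rw [B₀.equivFun_symm_apply]
      have : ((∑ t, y t • B₀ t : C) : Fin n → L) j = ∑ t, y t * (B₀ t : Fin n → L) j := by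
        rw [← Submodule.coe_subtype, map_sum]
        simp [Finset.sum_apply]
      rw [this]
      exact Finset.sum_congr rfl (fun t _ => by rw [hM]; simp [Matrix.of_apply]; ring)
    rw [heq, LinearMap.range_comp, LinearEquiv.range]
  have hrankT : Matrix.rank Mᵀ = k := by
    rw [Matrix.rank, hMT, Submodule.map_subtype_top, hk]
  have hrankM : Matrix.rank M = k := by rw [← Matrix.rank_transpose, hrankT]
  have hspan_top : Submodule.span L (Set.range Mᵀ) = ⊤ := by
    apply Submodule.eq_top_of_finrank_eq
    have : Module.finrank L (Submodule.span L (Set.range Mᵀ)) = Matrix.rank M := by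
      rw [Matrix.rank, Matrix.range_mulVecLin]
      rfl
    rw [this, hrankM, Module.finrank_pi, Fintype.card_fin]
  obtain ⟨s, hs_sub, hs_span, hs_ind⟩ := exists_linearIndependent L (Set.range Mᵀ)
  have hsTop : ⊤ ≤ Submodule.span L (Set.range ((↑) : s → (Fin k → L))) := by
    rw [Subtype.range_coe, hs_span, hspan_top]
  let B₁ : Basis s L (Fin k → L) := Basis.mk hs_ind hsTop
  haveI : Fintype s := FiniteDimensional.fintypeBasisIndex B₁
  have hcard : Fintype.card s = k := by
    rw [← Module.finrank_eq_card_basis B₁, Module.finrank_pi, Fintype.card_fin]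
  let e : Fin k ≃ s := (Fintype.equivFinOfCardEq hcard).symm
  have hmem : ∀ s₀ : Fin k, ((e s₀ : Fin k → L)) ∈ Set.range Mᵀ := fun s₀ => hs_sub (e s₀).2
  choose p hp using hmem
  -- the projection onto the pivot coordinates
  set π : C →ₗ[L] (Fin k → L) := (LinearMap.funLeft L L p).comp C.subtype with hπdef
  have hπ_apply : ∀ (c : C) (s₀ : Fin k), π c s₀ = (c : Fin n → L) (p s₀) := fun _ _ => rfl
  have hMTp : ∀ s₀ t, Mᵀ (p s₀) t = (B₀ t : Fin n → L) (p s₀) := fun _ _ => rfl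
  have hπinj : Function.Injective π := by
    rw [← LinearMap.ker_eq_bot, Submodule.eq_bot_iff]
    intro c hc
    rw [LinearMap.mem_ker] at hc
    set a : Fin k → L := fun t => B₀.repr c t with hadef
    have hrepr : (∑ t, a t • B₀ t) = c := B₀.sum_repr c
    have hval : ∀ j, (c : Fin n → L) j = ∑ t, a t * (B₀ t : Fin n → L) j := by
      intro j
      conv_lhs => rw [← hrepr]
      rw [← Submodule.coe_subtype, map_sum]
      simp [Finset.sum_apply]
    have h0 : ∀ s₀, (∑ t, a t * (e s₀ : Fin k → L) t) = 0 := by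
      intro s₀
      have hc0 : π c s₀ = 0 := by rw [hc]; rfl
      rw [hπ_apply, hval] at hc0
      rw [← hc0]
      refine Finset.sum_congr rfl (fun t _ => ?_)
      rw [← hp s₀]
      rfl
    set F : (Fin k → L) →ₗ[L] L := ∑ t, a t • LinearMap.proj t with hFdef
    have hF_apply : ∀ x : Fin k → L, F x = ∑ t, a t * x t := by
      intro x
      rw [hFdef]
      simp [LinearMap.sum_apply, LinearMap.smul_apply]
    have hB₂ : ∀ s₀ : Fin k, F ((B₁.reindex e.symm.symm.symm) s₀) = 0 := by
      intro s₀
      rw [Basis.reindex_apply]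
      have : B₁ (e.symm.symm.symm.symm s₀) = ((e s₀ : Fin k → L)) := by
        simp [B₁, Basis.mk_apply]
      rw [this, hF_apply]
      exact h0 s₀
    have hF0 : F = 0 := (B₁.reindex e.symm.symm.symm).ext (fun s₀ => by
      rw [hB₂ s₀]; rfl)
    have ha0 : ∀ t, a t = 0 := by
      intro t
      have := congrArg (fun f : (Fin k → L) →ₗ[L] L => f (Pi.single t 1)) hF0
      simp only [LinearMap.zero_apply] at this
      rw [hF_apply] at this
      rw [Finset.sum_eq_single t (fun t' _ ht' => by
        rw [Pi.single_eq_of_ne ht', mul_zero]) (fun h => absurd (Finset.mem_univ t) h)]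
        at this
      simpa using this
    have : c = (0 : C) := by
      rw [← hrepr]
      simp [ha0]
    simpa using this
  have hπsurj : LinearMap.range π = ⊤ := by
    apply Submodule.eq_top_of_finrank_eq
    rw [LinearMap.finrank_range_of_inj hπinj, hk, Module.finrank_pi, Fintype.card_fin]
  let equivP : C ≃ₗ[L] (Fin k → L) :=
    LinearEquiv.ofBijective π ⟨hπinj, LinearMap.range_eq_top.mp hπsurj⟩
  set g : Fin k → Fin n → L := fun t => ((equivP.symm (Pi.single t 1) : C) : Fin n → L)
    with hgdef
  have hgC : ∀ t, g t ∈ C := fun t => (equivP.symm (Pi.single t 1)).2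
  have hpiv : ∀ t s₀, g t (p s₀) = if s₀ = t then 1 else 0 := by
    intro t s₀
    have h1 : π (equivP.symm (Pi.single t 1)) = Pi.single t 1 := by
      have := equivP.apply_symm_apply (Pi.single t 1)
      exact this
    have := congrFun h1 s₀
    rw [hπ_apply] at this
    rw [hgdef]
    simp only []
    rw [this, Pi.single_apply]
  let B₃ : Basis (Fin k) L C := (Pi.basisFun L (Fin k)).map equivP.symm
  have hgB : ∀ t, ((B₃ t : C) : Fin n → L) = g t := by
    intro t
    rw [Basis.map_apply, Pi.basisFun_apply]
  have hg_ind : LinearIndependent L g := by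
    have h1 : LinearIndependent L (fun t => (B₃ t : C)) := B₃.linearIndependent
    have h2 := h1.map' C.subtype (Submodule.ker_subtype C)
    have : (C.subtype ∘ fun t => (B₃ t : C)) = g := funext (fun t => hgB t)
    rwa [this] at h2
  have hg_span : Submodule.span L (Set.range g) = C := by
    have h1 : Set.range g = C.subtype '' (Set.range (fun t => (B₃ t : C))) := by
      rw [← Set.range_comp]
      exact congrArg Set.range (funext (fun t => (hgB t).symm))
    rw [h1, Submodule.span_image]
    have h2 : Submodule.span L (Set.range (fun t => (B₃ t : C))) = ⊤ := B₃.span_eq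
    rw [h2, Submodule.map_subtype_top]
  exact ⟨p, g, hgC, hg_ind, hg_span, hpiv⟩

end Pivot

theorem stmt_7 {K L : Type} [Field K] [Field L] [Algebra K L] {n k : ℕ}
    (hnm : n ≤ Module.finrank K L)
    (C : Submodule L (Fin n → L)) (hk : Module.finrank L C = k)
    (hmax : IsGreatest {r : ℕ | ∃ c ∈ C, Module.finrank K (rkSupport K c) = r} k) :
    ∃ b : Fin k → (Fin n → L), LinearIndependent L b ∧
      Submodule.span L (Set.range b) = C ∧
      ∀ i j, ∃ x : K, b i j = algebraMap K L x := by
  classical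
  have hkn : k ≤ n := by
    rw [← hk]
    have h1 := Submodule.finrank_le C
    rwa [Module.finrank_pi, Fintype.card_fin] at h1
  rcases Nat.eq_zero_or_pos k with k0 | kpos
  · subst k0
    have hC : C = ⊥ := Submodule.finrank_eq_zero.mp hk
    refine ⟨Fin.elim0, linearIndependent_empty_type, ?_, fun i => i.elim0⟩
    rw [hC, Set.range_eq_empty, Submodule.span_empty]
  rcases eq_or_lt_of_le hkn with hkeq | hklt
  · -- k = n : C is everything, use the standard basis
    subst hkeq
    have hC : C = ⊤ := by
      apply Submodule.eq_top_of_finrank_eq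
      rw [hk, Module.finrank_pi, Fintype.card_fin]
    refine ⟨fun i => (Pi.basisFun L (Fin k)) i, (Pi.basisFun L (Fin k)).linearIndependent,
      by rw [(Pi.basisFun L (Fin k)).span_eq, hC], ?_⟩
    intro i j
    refine ⟨if j = i then 1 else 0, ?_⟩
    simp [Pi.basisFun_apply, Pi.single_apply, apply_ite (algebraMap K L)]
  · -- main case : 0 < k < n ≤ m
    haveI : FiniteDimensional K L := FiniteDimensional.of_finrank_pos
      (lt_of_lt_of_le (lt_of_le_of_lt (Nat.zero_le k) hklt) hnm)
    obtain ⟨p, g, hgC, hgind, hgspan, hpiv⟩ := exists_pivot_basis C hk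
    have hEntry : ∀ (lam : Fin k → L), LinearIndependent K lam → ∀ j,
        (∑ t, lam t * g t j) ∈ Submodule.span K (Set.range lam) := by
      intro lam hlam j
      set c : Fin n → L := ∑ t, lam t • g t with hc
      have hcC : c ∈ C := Submodule.sum_mem _ (fun t _ => Submodule.smul_mem _ _ (hgC t))
      have hcapp : ∀ j', c j' = ∑ t, lam t * g t j' := by
        intro j'
        rw [hc, Finset.sum_apply]
        rfl
      have hrk : Module.finrank K (rkSupport K c) ≤ k := hmax.2 ⟨c, hcC, rfl⟩
      have hcp : ∀ s, c (p s) = lam s := by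
        intro s
        rw [hcapp]
        rw [Finset.sum_congr rfl (fun t _ => by rw [hpiv t s, mul_ite, mul_one, mul_zero])]
        simp
      by_contra hnot
      rw [← hcapp] at hnot
      have hconsind : LinearIndependent K (Fin.cons (c j) lam : Fin (k + 1) → L) :=
        linearIndependent_fin_cons.mpr ⟨hlam, hnot⟩
      have hcomp : c ∘ (Fin.cons j p : Fin (k + 1) → Fin n)
          = (Fin.cons (c j) lam : Fin (k + 1) → L) := by
        funext t
        refine Fin.cases ?_ (fun s => ?_) t
        · simp
        · simp [hcp s]
      have hge := le_finrank_rkSupport (K := K) c (Fin.cons j p) (by rw [hcomp]; exact hconsind)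
      omega
    refine ⟨g, hgind, hgspan, ?_⟩
    intro i j
    exact entries_in_base (lt_of_lt_of_le hklt hnm) (fun t => g t j)
      (fun lam hlam => by simpa using hEntry lam hlam j) i
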